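/- The stationary mean age under the threshold-n policy equals the closed form of Theorem 2: Σ_{i=1}^{L} i·u^n(i) = [((n−1)² + (n−1))p² + 2p(n−1) + 2(1 − (1−p)^{L−n+1})] / (2p((n−1)p + 1)). -/

import Mathlib

lemma gaussR (n : ℕ) : ∑ i ∈ Finset.Icc 1 n, (i:ℝ) = n*(n+1)/2 := by
  induction n with
  | zero => simp
  | succ m ih =>
    rw [Finset.sum_Icc_succ_top (by omega : 1 ≤ m+1), ih]
    push_cast; ring

lemma geomA (q : ℝ) (n M : ℕ) :
    (1-q)^2 * ∑ i ∈ Finset.Icc (n+1) (n+M), (i:ℝ) * q^(i-n) =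
      (n:ℝ)*(1-q)*(q - q^(M+1)) + q - ((M:ℝ)+1)*q^(M+1) + (M:ℝ)*q^(M+2) := by
  induction M with
  | zero => simp
  | succ m ih =>
    have h : n + (m+1) = (n + m) + 1 := by omega
    rw [h, Finset.sum_Icc_succ_top (by omega : n+1 ≤ n+m+1)]
    have h2 : n + m + 1 - n = m + 1 := by omega
    rw [h2]
    push_cast
    linear_combination ih


/-- With `p`, `L`, `n` and `u^n` as in the paper, the
stationary mean age under the threshold-`n` policy equals the closed form of
Theorem 2:
`Σ_{i=1}^{L} i·u^n(i)
  = [((n−1)² + (n−1))p² + 2p(n−1) + 2(1 − (1−p)^{L−n+1})] / (2p((n−1)p + 1))`. -/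
theorem stmt2 (p : ℝ) (hp0 : 0 < p) (hp1 : p < 1) (L n : ℕ) (hL : 2 ≤ L)
    (hn1 : 1 ≤ n) (hnL : n ≤ L) (u : ℕ → ℝ)
    (hu1 : ∀ i : ℕ, 1 ≤ i → i ≤ n → i < L → u i = p / ((n : ℝ) * p + 1 - p))
    (hu2 : ∀ i : ℕ, n < i → i < L →
      u i = (1 - p) ^ (i - n) * p / ((n : ℝ) * p + 1 - p))
    (hu3 : u L = (1 - p) ^ (L - n) / ((n : ℝ) * p + 1 - p)) :
    ∑ i ∈ Finset.Icc 1 L, (i : ℝ) * u i =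
      ((((n : ℝ) - 1) ^ 2 + ((n : ℝ) - 1)) * p ^ 2 + 2 * p * ((n : ℝ) - 1)
          + 2 * (1 - (1 - p) ^ (L - n + 1))) /
        (2 * p * (((n : ℝ) - 1) * p + 1)) := by
  have hn1' : (1:ℝ) ≤ (n:ℝ) := by exact_mod_cast hn1
  have hD : (n:ℝ) * p + 1 - p ≠ 0 := by nlinarith
  have hD2 : ((n:ℝ) - 1) * p + 1 ≠ 0 := by
    intro h; apply hD; linarith [h]
  have hL1 : L = (L-1) + 1 := by omega
  rw [hL1, Finset.sum_Icc_succ_top (by omega : 1 ≤ L - 1 + 1)]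
  rw [show L - 1 + 1 = L from by omega] at *
  rcases eq_or_lt_of_le hnL with hEq | hlt
  · -- n = L
    subst hEq
    have key : ∀ i ∈ Finset.Icc 1 (n-1), (i:ℝ) * u i = (i:ℝ) * (p / ((n:ℝ)*p+1-p)) := by
      intro i hi
      simp only [Finset.mem_Icc] at hi
      rw [hu1 i hi.1 (by omega) (by omega)]
    rw [Finset.sum_congr rfl key, hu3]
    rw [show n - n = 0 from by omega, ← Finset.sum_mul, gaussR]
    have hc : ((n:ℝ) - 1 + 1) = (n:ℝ) := by ring
    have hcast : ((n - 1 : ℕ) : ℝ) = (n:ℝ) - 1 := by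
      have : (1:ℕ) ≤ n := hn1
      push_cast [this]; ring
    rw [hcast]
    field_simp
    ring
  · -- n < L
    set M := L - 1 - n with hM
    have hLM : L - 1 = n + M := by omega
    have hLn : L - n = M + 1 := by omega
    have hLn1 : L - n + 1 = M + 2 := by omega
    have s1 : ∑ i ∈ Finset.Icc 1 (L-1), (i:ℝ) * u i
        = (∑ i ∈ Finset.Icc 1 n, (i:ℝ)) * (p / ((n:ℝ)*p+1-p))
          + (∑ i ∈ Finset.Icc (n+1) (n+M), (i:ℝ) * (1-p)^(i-n)) * (p / ((n:ℝ)*p+1-p)) := by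
      have e1 : Finset.Icc 1 (L-1) = Finset.Ioc 0 (L-1) := by
        rw [← Finset.Icc_add_one_left_eq_Ioc]; rfl
      have e2 : Finset.Icc 1 n = Finset.Ioc 0 n := by
        rw [← Finset.Icc_add_one_left_eq_Ioc]; rfl
      have e3 : Finset.Ioc n (L-1) = Finset.Icc (n+1) (n+M) := by
        rw [Finset.Icc_add_one_left_eq_Ioc, hLM]
      rw [e1, e2, ← Finset.sum_Ioc_consecutive _ (Nat.zero_le n) (by omega : n ≤ L-1), e3]
      congr 1
      · rw [Finset.sum_mul]
        apply Finset.sum_congr rfl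
        intro i hi
        simp only [Finset.mem_Ioc] at hi
        rw [hu1 i hi.1 hi.2 (by omega)]
      · rw [Finset.sum_mul]
        apply Finset.sum_congr rfl
        intro i hi
        simp only [Finset.mem_Icc, Nat.succ_le_iff] at hi
        rw [hu2 i (by omega) (by omega)]
        ring
    rw [s1, hu3, hLn, gaussR]
    have hgeo := geomA (1-p) n M
    rw [show (1 - (1-p)) = p from by ring] at hgeo
    have hcastL : ((L:ℕ) : ℝ) = (n:ℝ) + M + 1 := by
      have : L = n + M + 1 := by omega
      rw [this]; push_cast; ring
    rw [hcastL]
    set T := ∑ i ∈ Finset.Icc (n+1) (n+M), (i:ℝ) * (1-p)^(i-n)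
    have hp : p ≠ 0 := ne_of_gt hp0
    field_simp
    rw [eq_div_iff (by rw [mul_comm]; exact hD2)]
    linear_combination (2*(p*((n:ℝ)-1)+1)) * hgeo
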